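/- Let A be a Banach lattice algebra with identity e. Then the order ideal A_e generated by e is a projection band in A: for every x ∈ A there exist unique y, z ∈ A such that x = y + z, y ∈ A_e, and |z| ⊓ |w| = 0 for every w ∈ A_e. -/

import Mathlib

set_option linter.unusedSectionVars false
set_option maxHeartbeats 1000000

section Aux

variable {A : Type*} [NormedAddCommGroup A] [Lattice A] [IsOrderedAddMonoid A]
    [HasSolidNorm A] [NormedSpace ℝ A]
    [PosSMulStrictMono ℝ A]

lemma aux_smul_inf (c : ℝ) (hc : 0 < c) (x y : A) : c • (x ⊓ y) = c • x ⊓ c • y :=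
  (OrderIso.smulRight hc).map_inf x y

/-- subadditivity of inf over addition for nonneg elements -/
lemma aux_inf_add_le {a b c : A} (ha : 0 ≤ a) (hb : 0 ≤ b) (hc : 0 ≤ c) :
    (a + b) ⊓ c ≤ (a ⊓ c) + (b ⊓ c) := by
  have h1 : (a + b) ⊓ c ≤ (a ⊓ c) + b := by
    calc (a + b) ⊓ c ≤ (a + b) ⊓ (c + b) :=
          inf_le_inf_left _ (le_add_of_nonneg_right hb)
      _ = (a ⊓ c) + b := ((OrderIso.addRight b).map_inf a c).symm
  have h2 : (a + b) ⊓ c ≤ (a ⊓ c) + c :=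
    le_trans inf_le_right (le_add_of_nonneg_left (le_inf ha hc))
  calc (a + b) ⊓ c ≤ ((a ⊓ c) + b) ⊓ ((a ⊓ c) + c) := le_inf h1 h2
    _ = (a ⊓ c) + (b ⊓ c) := ((OrderIso.addLeft (a ⊓ c)).map_inf b c).symm

variable (mul : A →ₗ[ℝ] A →ₗ[ℝ] A)

lemma aux_mul_mono_right (mul_nonneg : ∀ a b : A, 0 ≤ a → 0 ≤ b → 0 ≤ mul a b)
    {a x y : A} (ha : 0 ≤ a) (h : x ≤ y) : mul a x ≤ mul a y := by
  have := mul_nonneg a (y - x) ha (sub_nonneg.2 h)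
  rw [map_sub] at this
  exact sub_nonneg.mp this

lemma aux_mul_mono_left (mul_nonneg : ∀ a b : A, 0 ≤ a → 0 ≤ b → 0 ≤ mul a b)
    {a x y : A} (ha : 0 ≤ a) (h : x ≤ y) : mul x a ≤ mul y a := by
  have := mul_nonneg (y - x) a (sub_nonneg.2 h) ha
  rw [map_sub, LinearMap.sub_apply] at this
  exact sub_nonneg.mp this

/-- the multiplicative identity is positive -/
lemma aux_e_nonneg
    (mul_assoc : ∀ a b c : A, mul (mul a b) c = mul a (mul b c))
    (norm_mul_le : ∀ a b : A, ‖mul a b‖ ≤ ‖a‖ * ‖b‖)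
    (mul_nonneg : ∀ a b : A, 0 ≤ a → 0 ≤ b → 0 ≤ mul a b)
    (e : A) (h_one_mul : ∀ a : A, mul e a = a) (h_mul_one : ∀ a : A, mul a e = a)
    (norm_e : ‖e‖ = 1) : 0 ≤ e := by
  have hpq : e⁺ - e⁻ = e := posPart_sub_negPart e
  have hp0 : 0 ≤ e⁺ := posPart_nonneg e
  have hq0 : 0 ≤ e⁻ := negPart_nonneg e
  have habs : e⁺ + e⁻ = |e| := posPart_add_negPart e
  have h1 : mul e⁺ e⁻ = e⁻ + mul e⁻ e⁻ := by
    have h : mul (e⁺ - e⁻) e⁻ = e⁻ := by rw [hpq]; exact h_one_mul _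
    rw [map_sub, LinearMap.sub_apply] at h
    exact eq_add_of_sub_eq h
  have h2 : mul e⁻ e⁺ = e⁻ + mul e⁻ e⁻ := by
    have h : mul e⁻ (e⁺ - e⁻) = e⁻ := by rw [hpq]; exact h_mul_one _
    rw [map_sub] at h
    exact eq_add_of_sub_eq h
  have h3 : mul e⁺ e⁺ = e⁺ + e⁻ + mul e⁻ e⁻ := by
    have h : mul (e⁺ - e⁻) e⁺ = e⁺ := by rw [hpq]; exact h_one_mul _
    rw [map_sub, LinearMap.sub_apply] at h
    have h' := eq_add_of_sub_eq h
    rw [h2] at h'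
    rw [h']; abel
  have hq20 : 0 ≤ mul e⁻ e⁻ := mul_nonneg _ _ hq0 hq0
  have hu0 : 0 ≤ e⁺ + e⁻ := add_nonneg hp0 hq0
  have hnu : ‖e⁺ + e⁻‖ = 1 := by rw [habs, norm_abs_eq_norm, norm_e]
  have huq : mul (e⁺ + e⁻) e⁻ = e⁻ + (2:ℝ) • mul e⁻ e⁻ := by
    rw [map_add, LinearMap.add_apply, h1, two_smul]; abel
  have huq2 : mul e⁻ e⁻ ≤ mul (e⁺ + e⁻) (mul e⁻ e⁻) := by
    have e1 : mul (e⁺ + e⁻) (mul e⁻ e⁻) = mul e⁺ (mul e⁻ e⁻) + mul e⁻ (mul e⁻ e⁻) := by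
      rw [map_add, LinearMap.add_apply]
    have e2 : mul e⁺ (mul e⁻ e⁻) = mul e⁻ e⁻ + mul (mul e⁻ e⁻) e⁻ := by
      rw [← mul_assoc, h1, map_add, LinearMap.add_apply]
    have n1 : 0 ≤ mul e⁻ (mul e⁻ e⁻) := mul_nonneg _ _ hq0 hq20
    have n2 : 0 ≤ mul (mul e⁻ e⁻) e⁻ := mul_nonneg _ _ hq20 hq0
    rw [e1, e2]
    have h' : mul e⁻ e⁻ + mul (mul e⁻ e⁻) e⁻ + mul e⁻ (mul e⁻ e⁻)
        = mul e⁻ e⁻ + (mul (mul e⁻ e⁻) e⁻ + mul e⁻ (mul e⁻ e⁻)) := by abel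
    rw [h']
    exact le_add_of_nonneg_right (add_nonneg n2 n1)
  have key : ∀ k : ℕ, ∃ v : A, 0 ≤ v ∧ ‖v‖ ≤ ‖e⁻‖ ∧ e⁻ + (2 * (k:ℝ)) • mul e⁻ e⁻ ≤ v := by
    intro k
    induction k with
    | zero => exact ⟨e⁻, hq0, le_refl _, by simp⟩
    | succ k ih =>
      obtain ⟨v, hv0, hvn, hvle⟩ := ih
      refine ⟨mul (e⁺ + e⁻) v, mul_nonneg _ _ hu0 hv0, ?_, ?_⟩
      · calc ‖mul (e⁺ + e⁻) v‖ ≤ ‖e⁺ + e⁻‖ * ‖v‖ := norm_mul_le _ v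
          _ = ‖v‖ := by rw [hnu]; ring
          _ ≤ ‖e⁻‖ := hvn
      · have step : mul (e⁺ + e⁻) (e⁻ + (2*(k:ℝ)) • mul e⁻ e⁻) ≤ mul (e⁺ + e⁻) v :=
          aux_mul_mono_right mul mul_nonneg hu0 hvle
        have expand : mul (e⁺ + e⁻) (e⁻ + (2*(k:ℝ)) • mul e⁻ e⁻)
            = e⁻ + (2:ℝ) • mul e⁻ e⁻ + (2*(k:ℝ)) • mul (e⁺ + e⁻) (mul e⁻ e⁻) := by
          rw [map_add, map_smul, huq]
        have mono2 : (2*(k:ℝ)) • mul e⁻ e⁻ ≤ (2*(k:ℝ)) • mul (e⁺ + e⁻) (mul e⁻ e⁻) :=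
          smul_le_smul_of_nonneg_left huq2 (by positivity)
        have final : e⁻ + (2*((k:ℝ)+1)) • mul e⁻ e⁻ ≤ mul (e⁺ + e⁻) v := by
          have heq : e⁻ + (2*((k:ℝ)+1)) • mul e⁻ e⁻
              = (e⁻ + (2:ℝ) • mul e⁻ e⁻) + (2*(k:ℝ)) • mul e⁻ e⁻ := by
            rw [show (2*((k:ℝ)+1)) = 2 + 2*(k:ℝ) by ring, add_smul]; abel
          rw [heq]
          calc (e⁻ + (2:ℝ) • mul e⁻ e⁻) + (2*(k:ℝ)) • mul e⁻ e⁻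
              ≤ (e⁻ + (2:ℝ) • mul e⁻ e⁻) + (2*(k:ℝ)) • mul (e⁺ + e⁻) (mul e⁻ e⁻) :=
                add_le_add_right mono2 _
            _ = mul (e⁺ + e⁻) (e⁻ + (2*(k:ℝ)) • mul e⁻ e⁻) := by rw [expand]
            _ ≤ mul (e⁺ + e⁻) v := step
        have hc : ((k+1 : ℕ) : ℝ) = (k:ℝ)+1 := by push_cast; ring
        rw [hc]
        exact final
  have hq2 : mul e⁻ e⁻ = 0 := by
    by_contra hne
    have hpos : 0 < ‖mul e⁻ e⁻‖ := norm_pos_iff.mpr hne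
    obtain ⟨k, hk⟩ := exists_nat_gt (‖e⁻‖ / (2 * ‖mul e⁻ e⁻‖) + 1)
    obtain ⟨v, hv0, hvn, hvle⟩ := key k
    have h2k : (0:ℝ) ≤ 2 * k := by positivity
    have hbound : ‖(2 * (k:ℝ)) • mul e⁻ e⁻‖ ≤ ‖v‖ := by
      apply norm_le_norm_of_abs_le_abs
      rw [abs_of_nonneg (smul_nonneg h2k hq20), abs_of_nonneg hv0]
      calc (2 * (k:ℝ)) • mul e⁻ e⁻ ≤ e⁻ + (2 * (k:ℝ)) • mul e⁻ e⁻ :=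
            le_add_of_nonneg_left hq0
        _ ≤ v := hvle
    rw [norm_smul, Real.norm_eq_abs, abs_of_nonneg h2k] at hbound
    have hle : 2 * (k:ℝ) * ‖mul e⁻ e⁻‖ ≤ ‖e⁻‖ := hbound.trans hvn
    have hk' : ‖e⁻‖ / (2 * ‖mul e⁻ e⁻‖) < k := by linarith
    rw [div_lt_iff₀ (by positivity)] at hk'
    linarith
  rw [hq2] at h1 h2 h3
  simp only [add_zero] at h1 h2 h3
  have hpn : ‖e⁺‖ ≤ 1 := by
    calc ‖e⁺‖ ≤ ‖|e|‖ := norm_le_norm_of_abs_le_abs (by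
          rw [abs_of_nonneg hp0, abs_abs, ← habs]; exact le_add_of_nonneg_right hq0)
      _ = 1 := by rw [norm_abs_eq_norm, norm_e]
  have key2 : ∀ k : ℕ, ∃ v : A, v = e⁺ + (k : ℝ) • e⁻ ∧ ‖v‖ ≤ 1 := by
    intro k
    induction k with
    | zero => exact ⟨e⁺, by simp, hpn⟩
    | succ k ih =>
      obtain ⟨v, hveq, hvn⟩ := ih
      refine ⟨mul e⁺ v, ?_, ?_⟩
      · rw [hveq, map_add, map_smul, h3, h1]
        push_cast
        rw [add_smul, one_smul]
        abel
      · calc ‖mul e⁺ v‖ ≤ ‖e⁺‖ * ‖v‖ := norm_mul_le _ v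
          _ ≤ 1 * 1 := mul_le_mul hpn hvn (norm_nonneg v) zero_le_one
          _ = 1 := by ring
  have hqz : e⁻ = 0 := by
    by_contra hne
    have hpos : 0 < ‖e⁻‖ := norm_pos_iff.mpr hne
    obtain ⟨k, hk⟩ := exists_nat_gt (1 / ‖e⁻‖ + 1)
    obtain ⟨v, hveq, hvn⟩ := key2 k
    have hbound : ‖(k : ℝ) • e⁻‖ ≤ ‖v‖ := by
      apply norm_le_norm_of_abs_le_abs
      rw [abs_of_nonneg (smul_nonneg (by positivity) hq0),
        abs_of_nonneg (by rw [hveq]; exact add_nonneg hp0 (smul_nonneg (by positivity) hq0))]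
      rw [hveq]; exact le_add_of_nonneg_left hp0
    rw [norm_smul, Real.norm_eq_abs, abs_of_nonneg (by positivity : (0:ℝ) ≤ (k:ℝ))] at hbound
    have hle : (k:ℝ) * ‖e⁻‖ ≤ 1 := hbound.trans hvn
    have hk' : 1 / ‖e⁻‖ < k := by linarith
    rw [div_lt_iff₀ hpos] at hk'
    linarith
  exact negPart_eq_zero.mp hqz

end Aux


section Dom

variable {A : Type*} [NormedAddCommGroup A] [Lattice A] [IsOrderedAddMonoid A]
    [HasSolidNorm A] [NormedSpace ℝ A]
    [PosSMulStrictMono ℝ A] [CompleteSpace A]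

/-- iterated powers w^n (with w^0 = e) -/
def auxPow (mul : A →ₗ[ℝ] A →ₗ[ℝ] A) (e w : A) : ℕ → A
  | 0 => e
  | n+1 => mul w (auxPow mul e w n)

variable (mul : A →ₗ[ℝ] A →ₗ[ℝ] A)

lemma auxPow_nonneg (mul_nonneg : ∀ a b : A, 0 ≤ a → 0 ≤ b → 0 ≤ mul a b)
    {e w : A} (he : 0 ≤ e) (hw : 0 ≤ w) : ∀ n, 0 ≤ auxPow mul e w n
  | 0 => he
  | n+1 => mul_nonneg _ _ hw (auxPow_nonneg mul_nonneg he hw n)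

lemma auxPow_norm_le (norm_mul_le : ∀ a b : A, ‖mul a b‖ ≤ ‖a‖ * ‖b‖)
    {e w : A} (norm_e : ‖e‖ = 1) : ∀ n, ‖auxPow mul e w n‖ ≤ ‖w‖ ^ n
  | 0 => by simp [auxPow, norm_e]
  | n+1 => by
      calc ‖auxPow mul e w (n+1)‖ ≤ ‖w‖ * ‖auxPow mul e w n‖ := norm_mul_le _ _
        _ ≤ ‖w‖ * ‖w‖ ^ n := by
            exact mul_le_mul_of_nonneg_left (auxPow_norm_le norm_mul_le norm_e n) (norm_nonneg w)
        _ = ‖w‖ ^ (n+1) := by ring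

lemma auxPow_comm (mul_assoc : ∀ a b c : A, mul (mul a b) c = mul a (mul b c))
    {e w : A} (h_one_mul : mul e w = w) (h_mul_one : mul w e = w) :
    ∀ n, mul (auxPow mul e w n) w = mul w (auxPow mul e w n)
  | 0 => by simp [auxPow, h_one_mul, h_mul_one]
  | n+1 => by
      show mul (mul w (auxPow mul e w n)) w = _
      rw [mul_assoc, auxPow_comm mul_assoc h_one_mul h_mul_one n]
      rfl

/-- Key lemma: a positive element of the ideal of `e` is dominated by `μ • e`
for any `μ` exceeding its norm. -/
lemma aux_dominated
    (mul_assoc : ∀ a b c : A, mul (mul a b) c = mul a (mul b c))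
    (norm_mul_le : ∀ a b : A, ‖mul a b‖ ≤ ‖a‖ * ‖b‖)
    (mul_nonneg : ∀ a b : A, 0 ≤ a → 0 ≤ b → 0 ≤ mul a b)
    (e : A) (h_one_mul : ∀ a : A, mul e a = a) (h_mul_one : ∀ a : A, mul a e = a)
    (norm_e : ‖e‖ = 1) (he : 0 ≤ e)
    {w : A} {lam μ : ℝ} (hw0 : 0 ≤ w) (hwl : w ≤ lam • e) (hlam : 0 ≤ lam)
    (hμ : ‖w‖ < μ) : w ≤ μ • e := by
  have hμ0 : 0 < μ := lt_of_le_of_lt (norm_nonneg w) hμ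
  set g : A := μ • e - w with hg
  -- the Neumann series
  set f : ℕ → A := fun n => (μ⁻¹) ^ (n+1) • auxPow mul e w n with hf
  have hratio : ‖w‖ * μ⁻¹ < 1 := by
    rw [← lt_div_iff₀ (by positivity)]
    simpa [one_div, inv_inv] using hμ
  have hratio0 : 0 ≤ ‖w‖ * μ⁻¹ := by positivity
  have hfnorm : ∀ n, ‖f n‖ ≤ μ⁻¹ * (‖w‖ * μ⁻¹) ^ n := by
    intro n
    simp only [hf]
    simp only [norm_smul, Real.norm_eq_abs, abs_pow, abs_of_pos (inv_pos.mpr hμ0)]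
    calc μ⁻¹ ^ (n+1) * ‖auxPow mul e w n‖ ≤ μ⁻¹ ^ (n+1) * ‖w‖ ^ n := by
          exact mul_le_mul_of_nonneg_left (auxPow_norm_le mul norm_mul_le norm_e n)
            (by positivity)
      _ = μ⁻¹ * (‖w‖ * μ⁻¹) ^ n := by ring
  have hsum : Summable f := by
    apply Summable.of_norm_bounded (Summable.mul_left μ⁻¹
      (summable_geometric_of_lt_one hratio0 hratio)) hfnorm
  set s : A := ∑' n, f n with hs
  have hs0 : 0 ≤ s := by
    apply tsum_nonneg
    intro n
    exact smul_nonneg (by positivity) (auxPow_nonneg mul mul_nonneg he hw0 n)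
  -- right multiplication by g as continuous linear map
  set Rg : A →L[ℝ] A := LinearMap.mkContinuous (LinearMap.flip mul g) ‖g‖
    (fun x => by rw [mul_comm ‖g‖ ‖x‖]; exact norm_mul_le x g) with hRg
  have hRg_apply : ∀ x, Rg x = mul x g := fun x => rfl
  -- telescoping
  set d : ℕ → A := fun n => (μ⁻¹) ^ n • auxPow mul e w n with hd
  have htel : ∀ n, mul (f n) g = d n - d (n+1) := by
    intro n
    simp only [hf, hd]
    simp only [map_smul, LinearMap.smul_apply]
    have expand : mul (auxPow mul e w n) g
        = μ • auxPow mul e w n - auxPow mul e w (n+1) := by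
      rw [hg, map_sub, map_smul, h_mul_one]
      congr 1
      rw [auxPow_comm mul mul_assoc (h_one_mul w) (h_mul_one w) n]
      rfl
    have hco : μ⁻¹ ^ (n+1) * μ = μ⁻¹ ^ n := by
      rw [pow_succ, _root_.mul_assoc, inv_mul_cancel₀ hμ0.ne', mul_one]
    rw [expand, smul_sub, smul_smul, hco]
  have hd0 : Filter.Tendsto d Filter.atTop (nhds 0) := by
    apply squeeze_zero_norm (fun n => ?_)
      (tendsto_pow_atTop_nhds_zero_of_lt_one hratio0 hratio)
    simp only [hd]
    simp only [norm_smul, Real.norm_eq_abs, abs_pow, abs_of_pos (inv_pos.mpr hμ0)]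
    calc μ⁻¹ ^ n * ‖auxPow mul e w n‖ ≤ μ⁻¹ ^ n * ‖w‖ ^ n :=
          mul_le_mul_of_nonneg_left (auxPow_norm_le mul norm_mul_le norm_e n) (by positivity)
      _ = (‖w‖ * μ⁻¹) ^ n := by ring
  have hsg : mul s g = e := by
    have h1 : mul s g = Rg s := rfl
    have h2 : Rg s = ∑' n, Rg (f n) := Rg.map_tsum hsum
    have h3 : (fun n => Rg (f n)) = fun n => d n - d (n+1) := by
      funext n; rw [hRg_apply, htel]
    have hsum2 : Summable (fun n => Rg (f n)) := hsum.map Rg.toLinearMap.toAddMonoidHom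
      Rg.continuous
    have h4 : Filter.Tendsto (fun K => ∑ i ∈ Finset.range K, Rg (f i))
        Filter.atTop (nhds (∑' n, Rg (f n))) := hsum2.hasSum.tendsto_sum_nat
    have h5 : Filter.Tendsto (fun K => ∑ i ∈ Finset.range K, Rg (f i))
        Filter.atTop (nhds (d 0 - 0)) := by
      have : (fun K => ∑ i ∈ Finset.range K, Rg (f i)) = fun K => d 0 - d K := by
        funext K
        rw [show (fun i => Rg (f i)) = fun i => d i - d (i+1) from h3]
        exact Finset.sum_range_sub' d K
      rw [this]
      exact Filter.Tendsto.sub tendsto_const_nhds hd0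
    have h6 : (∑' n, Rg (f n)) = d 0 - 0 := tendsto_nhds_unique h4 h5
    have h7 : d 0 = e := by simp only [hd]; simp [auxPow]
    rw [h1, h2, h6, h7, sub_zero]
  -- disjoint parts of g multiply to zero
  have hgabs : |g| ≤ (μ + lam) • e := by
    calc |g| ≤ |μ • e| + |w| := by
          rw [hg, sub_eq_add_neg]
          exact le_trans (abs_add_le _ _) (le_of_eq (by rw [abs_neg]))
      _ = μ • e + w := by
          rw [abs_of_nonneg (smul_nonneg hμ0.le he), abs_of_nonneg hw0]
      _ ≤ μ • e + lam • e := add_le_add_right hwl _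
      _ = (μ + lam) • e := (add_smul μ lam e).symm
  have hc0 : (0:ℝ) < μ + lam := by linarith
  have hgp : g⁺ ≤ (μ + lam) • e := by
    refine le_trans ?_ hgabs
    rw [← posPart_add_negPart g]
    exact le_add_of_nonneg_right (negPart_nonneg g)
  have hgn : g⁻ ≤ (μ + lam) • e := by
    refine le_trans ?_ hgabs
    rw [← posPart_add_negPart g]
    exact le_add_of_nonneg_left (posPart_nonneg g)
  have hdisj : mul g⁺ g⁻ = 0 := by
    have m0 : 0 ≤ mul g⁺ g⁻ := mul_nonneg _ _ (posPart_nonneg g) (negPart_nonneg g)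
    have m1 : mul g⁺ g⁻ ≤ (μ + lam) • g⁺ := by
      calc mul g⁺ g⁻ ≤ mul g⁺ ((μ + lam) • e) :=
            aux_mul_mono_right mul mul_nonneg (posPart_nonneg g) hgn
        _ = (μ + lam) • mul g⁺ e := map_smul _ _ _
        _ = (μ + lam) • g⁺ := by rw [h_mul_one]
    have m2 : mul g⁺ g⁻ ≤ (μ + lam) • g⁻ := by
      calc mul g⁺ g⁻ ≤ mul ((μ + lam) • e) g⁻ :=
            aux_mul_mono_left mul mul_nonneg (negPart_nonneg g) hgp
        _ = (μ + lam) • mul e g⁻ := by rw [map_smul, LinearMap.smul_apply]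
        _ = (μ + lam) • g⁻ := by rw [h_one_mul]
    have m3 : mul g⁺ g⁻ ≤ (μ + lam) • (g⁺ ⊓ g⁻) := by
      rw [aux_smul_inf _ hc0]
      exact le_inf m1 m2
    rw [posPart_inf_negPart_eq_zero, smul_zero] at m3
    exact le_antisymm m3 m0
  have hgneg : mul g g⁻ = -(mul g⁻ g⁻) := by
    have hsplit : mul (g⁺ - g⁻) g⁻ = mul g⁺ g⁻ - mul g⁻ g⁻ := by
      rw [map_sub, LinearMap.sub_apply]
    rw [posPart_sub_negPart g] at hsplit
    rw [hsplit, hdisj, zero_sub]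
  have hfinal : g⁻ ≤ 0 := by
    have step : mul (mul s g) g⁻ = -(mul s (mul g⁻ g⁻)) := by
      rw [mul_assoc, hgneg, map_neg]
    rw [hsg, h_one_mul] at step
    rw [step]
    exact neg_nonpos.mpr (mul_nonneg _ _ hs0
      (mul_nonneg _ _ (negPart_nonneg g) (negPart_nonneg g)))
  have hgz : 0 ≤ g := negPart_eq_zero.mp (le_antisymm hfinal (negPart_nonneg g))
  rw [hg] at hgz
  exact sub_nonneg.mp hgz

end Dom

section Main

variable {A : Type*} [NormedAddCommGroup A] [Lattice A] [IsOrderedAddMonoid A]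
    [HasSolidNorm A] [NormedSpace ℝ A]
    [PosSMulStrictMono ℝ A] [CompleteSpace A]
variable (mul : A →ₗ[ℝ] A →ₗ[ℝ] A)

/-- decomposition of a nonnegative element -/
lemma aux_decomp
    (mul_assoc : ∀ a b c : A, mul (mul a b) c = mul a (mul b c))
    (norm_mul_le : ∀ a b : A, ‖mul a b‖ ≤ ‖a‖ * ‖b‖)
    (mul_nonneg : ∀ a b : A, 0 ≤ a → 0 ≤ b → 0 ≤ mul a b)
    (e : A) (h_one_mul : ∀ a : A, mul e a = a) (h_mul_one : ∀ a : A, mul a e = a)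
    (norm_e : ‖e‖ = 1) (he : 0 ≤ e)
    {u : A} (hu : 0 ≤ u) :
    ∃ y z : A, u = y + z ∧ 0 ≤ y ∧ y ≤ (‖u‖ + 1) • e ∧ 0 ≤ z ∧
      ∀ t : ℝ, 0 ≤ t → z ⊓ t • e = 0 := by
  have hμ0 : (0:ℝ) < ‖u‖ + 1 := by positivity
  refine ⟨u ⊓ (‖u‖ + 1) • e, u - u ⊓ (‖u‖ + 1) • e, by abel, ?_, inf_le_right, ?_, ?_⟩
  · exact le_inf hu (smul_nonneg hμ0.le he)
  · exact sub_nonneg.2 inf_le_left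
  · intro t ht
    have hwt0 : 0 ≤ u ⊓ (‖u‖ + 1 + t) • e := le_inf hu (smul_nonneg (by positivity) he)
    have hwtnorm : ‖u ⊓ (‖u‖ + 1 + t) • e‖ < ‖u‖ + 1 := by
      have : ‖u ⊓ (‖u‖ + 1 + t) • e‖ ≤ ‖u‖ := by
        apply norm_le_norm_of_abs_le_abs
        rw [abs_of_nonneg hwt0, abs_of_nonneg hu]
        exact inf_le_left
      linarith
    have hw' : u ⊓ (‖u‖ + 1 + t) • e ≤ (‖u‖ + 1) • e :=
      aux_dominated mul mul_assoc norm_mul_le mul_nonneg e h_one_mul h_mul_one norm_e he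
        hwt0 inf_le_right (by positivity) hwtnorm
    set y := u ⊓ (‖u‖ + 1) • e with hy
    set z := u - y with hz
    have hz0 : 0 ≤ z := sub_nonneg.2 inf_le_left
    have hinf0 : 0 ≤ z ⊓ t • e := le_inf hz0 (smul_nonneg ht he)
    have hle : y + z ⊓ t • e ≤ y := by
      have ha : y + z ⊓ t • e ≤ u := by
        calc y + z ⊓ t • e ≤ y + z := add_le_add_right inf_le_left _
          _ = u := by rw [hz]; abel
      have hb : y + z ⊓ t • e ≤ (‖u‖ + 1 + t) • e := by
        calc y + z ⊓ t • e ≤ (‖u‖ + 1) • e + t • e :=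
              add_le_add inf_le_right inf_le_right
          _ = (‖u‖ + 1 + t) • e := (add_smul _ _ e).symm
      have hc : y + z ⊓ t • e ≤ (‖u‖ + 1) • e := le_trans (le_inf ha hb) hw'
      exact le_inf ha hc
    have : z ⊓ t • e ≤ 0 := (add_le_iff_nonpos_right y).mp hle
    exact le_antisymm this hinf0

end Main
/-- The order ideal generated by `e`: all `x` with `|x| ≤ λ • e` for some `λ ≥ 0`. -/
def orderIdealOfUnit {A : Type*} [NormedAddCommGroup A] [Lattice A] [IsOrderedAddMonoid A]
    [HasSolidNorm A] [NormedSpace ℝ A]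
    (e : A) : Set A :=
  {x : A | ∃ l : ℝ, 0 ≤ l ∧ |x| ≤ l • e}

/-- Scheffold. In a Banach lattice algebra with identity `e`, the
order ideal `A_e` generated by `e` is a projection band: every `x` decomposes uniquely
as `x = y + z` with `y ∈ A_e` and `z` disjoint from every element of `A_e`. -/
theorem ideal_generated_by_identity_is_projection_band
    {A : Type*} [NormedAddCommGroup A] [Lattice A] [IsOrderedAddMonoid A]
    [HasSolidNorm A] [NormedSpace ℝ A]
    [PosSMulStrictMono ℝ A] [CompleteSpace A]
    (mul : A →ₗ[ℝ] A →ₗ[ℝ] A)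
    (mul_assoc : ∀ a b c : A, mul (mul a b) c = mul a (mul b c))
    (norm_mul_le : ∀ a b : A, ‖mul a b‖ ≤ ‖a‖ * ‖b‖)
    (mul_nonneg : ∀ a b : A, 0 ≤ a → 0 ≤ b → 0 ≤ mul a b)
    (e : A) (one_mul : ∀ a : A, mul e a = a) (mul_one : ∀ a : A, mul a e = a)
    (norm_e : ‖e‖ = 1) :
    ∀ x : A, ∃! yz : A × A,
      x = yz.1 + yz.2 ∧ yz.1 ∈ orderIdealOfUnit e ∧
      ∀ w ∈ orderIdealOfUnit e, |yz.2| ⊓ |w| = 0 := by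
  intro x
  have he : 0 ≤ e :=
    aux_e_nonneg mul mul_assoc norm_mul_le mul_nonneg e one_mul mul_one norm_e
  obtain ⟨y₁, z₁, hx₁, hy₁0, hy₁le, hz₁0, hz₁d⟩ :=
    aux_decomp mul mul_assoc norm_mul_le mul_nonneg e one_mul mul_one norm_e he
      (posPart_nonneg x)
  obtain ⟨y₂, z₂, hx₂, hy₂0, hy₂le, hz₂0, hz₂d⟩ :=
    aux_decomp mul mul_assoc norm_mul_le mul_nonneg e one_mul mul_one norm_e he
      (negPart_nonneg x)
  set Y := y₁ - y₂ with hY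
  set Z := z₁ - z₂ with hZ
  -- `z ⊓ |w| = 0` for all `w` in the ideal
  have hZdisj : ∀ w ∈ orderIdealOfUnit e, |Z| ⊓ |w| = 0 := by
    rintro w ⟨l, hl0, hwl⟩
    have h1 : z₁ ⊓ |w| = 0 := by
      refine le_antisymm ?_ (le_inf hz₁0 (abs_nonneg w))
      calc z₁ ⊓ |w| ≤ z₁ ⊓ l • e := inf_le_inf_left _ hwl
        _ = 0 := hz₁d l hl0
    have h2 : z₂ ⊓ |w| = 0 := by
      refine le_antisymm ?_ (le_inf hz₂0 (abs_nonneg w))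
      calc z₂ ⊓ |w| ≤ z₂ ⊓ l • e := inf_le_inf_left _ hwl
        _ = 0 := hz₂d l hl0
    have habsZ : |Z| ≤ z₁ + z₂ := by
      calc |Z| ≤ |z₁| + |z₂| := by
            rw [hZ, sub_eq_add_neg]
            exact le_trans (abs_add_le _ _) (le_of_eq (by rw [abs_neg]))
        _ = z₁ + z₂ := by rw [abs_of_nonneg hz₁0, abs_of_nonneg hz₂0]
    refine le_antisymm ?_ (le_inf (abs_nonneg Z) (abs_nonneg w))
    calc |Z| ⊓ |w| ≤ (z₁ + z₂) ⊓ |w| := inf_le_inf_right _ habsZ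
      _ ≤ z₁ ⊓ |w| + z₂ ⊓ |w| := aux_inf_add_le hz₁0 hz₂0 (abs_nonneg w)
      _ = 0 := by rw [h1, h2, add_zero]
  -- membership of Y
  have hYmem : Y ∈ orderIdealOfUnit e := by
    refine ⟨(‖x⁺‖ + 1) + (‖x⁻‖ + 1), by positivity, ?_⟩
    calc |Y| ≤ |y₁| + |y₂| := by
          rw [hY, sub_eq_add_neg]
          exact le_trans (abs_add_le _ _) (le_of_eq (by rw [abs_neg]))
      _ = y₁ + y₂ := by rw [abs_of_nonneg hy₁0, abs_of_nonneg hy₂0]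
      _ ≤ (‖x⁺‖ + 1) • e + (‖x⁻‖ + 1) • e := add_le_add hy₁le hy₂le
      _ = ((‖x⁺‖ + 1) + (‖x⁻‖ + 1)) • e := (add_smul _ _ e).symm
  have hxYZ : x = Y + Z := by
    rw [hY, hZ]
    have : x = x⁺ - x⁻ := (posPart_sub_negPart x).symm
    rw [this, hx₁, hx₂]
    abel
  refine ⟨(Y, Z), ⟨hxYZ, hYmem, hZdisj⟩, ?_⟩
  rintro ⟨y', z'⟩ ⟨hx', hy'mem, hz'disj⟩
  obtain ⟨l', hl'0, hy'le⟩ := hy'mem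
  obtain ⟨L, hL0, hYle⟩ := hYmem
  have hD2 : y' - Y = Z - z' := by
    rw [sub_eq_sub_iff_add_eq_add, ← hx', hxYZ, add_comm]
  have hDmem : (y' - Y) ∈ orderIdealOfUnit e := by
    refine ⟨l' + L, by positivity, ?_⟩
    calc |y' - Y| ≤ |y'| + |Y| := by
          rw [sub_eq_add_neg]
          exact le_trans (abs_add_le _ _) (le_of_eq (by rw [abs_neg]))
      _ ≤ l' • e + L • e := add_le_add hy'le hYle
      _ = (l' + L) • e := (add_smul _ _ e).symm
  have hz'D : |z'| ⊓ |y' - Y| = 0 := hz'disj _ hDmem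
  have hZD : |Z| ⊓ |y' - Y| = 0 := hZdisj _ hDmem
  have habsD : |y' - Y| ≤ |Z| + |z'| := by
    rw [hD2, sub_eq_add_neg]
    exact le_trans (abs_add_le _ _) (le_of_eq (by rw [abs_neg]))
  have hDzero : |y' - Y| = 0 := by
    refine le_antisymm ?_ (abs_nonneg _)
    calc |y' - Y| = |y' - Y| ⊓ |y' - Y| := (inf_idem _).symm
      _ ≤ (|Z| + |z'|) ⊓ |y' - Y| := inf_le_inf_right _ habsD
      _ ≤ |Z| ⊓ |y' - Y| + |z'| ⊓ |y' - Y| :=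
          aux_inf_add_le (abs_nonneg Z) (abs_nonneg z') (abs_nonneg _)
      _ = 0 := by rw [hZD, hz'D, add_zero]
  have hyY : y' = Y := by
    have h1 : y' - Y ≤ 0 := hDzero ▸ le_abs_self _
    have h2 : -(y' - Y) ≤ 0 := hDzero ▸ neg_le_abs _
    exact sub_eq_zero.mp (le_antisymm h1 (neg_nonpos.mp h2))
  have hzZ : z' = Z := by
    have h := hx'.symm.trans hxYZ
    rw [hyY] at h
    exact add_left_cancel h
  rw [Prod.mk.injEq]
  exact ⟨hyY, hzZ⟩
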